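/- arXiv:2202.06917 — 4 statements merged into one kernel-verified Lean document; each statement's English description precedes it below -/
import Mathlib

section
/- Let Ω ⊂ ℝⁿ be a connected open set, y₀ ∈ ℝⁿ, and f : Ω → ℝⁿ a continuous map such that f⁻¹{y₀} is totally disconnected. Then for every x ∈ f⁻¹{y₀} there exists ε > 0 such that the connected component of f⁻¹(B(y₀, ε)) containing x has compact closure contained in Ω. -/
open Metric Set

/-- A decreasing intersection of compact preconnected sets in a T2 space is preconnected. -/
lemma isPreconnected_iInter_antitone {α : Type*} [TopologicalSpace α] [T2Space α]
    {K : ℕ → Set α} (hanti : Antitone K) (hcomp : ∀ i, IsCompact (K i))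
    (hconn : ∀ i, IsPreconnected (K i)) : IsPreconnected (⋂ i, K i) := by
  set s := ⋂ i, K i with hs
  intro u v hu hv hsuv ⟨a, has, hau⟩ ⟨b, hbs, hbv⟩
  by_contra hne
  rw [not_nonempty_iff_eq_empty] at hne
  -- A = s \ v and B = s \ u are disjoint nonempty compacts
  have hscomp : IsCompact s := (hcomp 0).of_isClosed_subset
    (isClosed_iInter fun i => (hcomp i).isClosed) (iInter_subset _ 0)
  have hA : IsCompact (s \ v) := hscomp.inter_right hv.isClosed_compl
  have hB : IsCompact (s \ u) := hscomp.inter_right hu.isClosed_compl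
  have hdisj : Disjoint (s \ v) (s \ u) := by
    rw [disjoint_left]
    rintro z ⟨hzs, hzv⟩ ⟨_, hzu⟩
    rcases hsuv hzs with h | h
    · exact hzu h
    · exact hzv h
  obtain ⟨U, V, hU, hV, hAU, hBV, hUV⟩ :=
    SeparatedNhds.of_isCompact_isCompact hA hB hdisj
  have hsUV : s ⊆ U ∪ V := by
    intro z hz
    by_cases hzv : z ∈ v
    · by_cases hzu : z ∈ u
      · exact absurd (show z ∈ s ∩ (u ∩ v) from ⟨hz, hzu, hzv⟩) (by simp [hne])
      · exact Or.inr (hBV ⟨hz, hzu⟩)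
    · exact Or.inl (hAU ⟨hz, hzv⟩)
  -- find n with K n ⊆ U ∪ V
  have hKn : ∃ n, K n ⊆ U ∪ V := by
    by_contra hcon
    push_neg at hcon
    have hne' : ∀ n, (K n ∩ (U ∪ V)ᶜ).Nonempty := by
      intro n
      obtain ⟨z, hz, hz'⟩ := Set.not_subset.mp (hcon n)
      exact ⟨z, hz, hz'⟩
    have hZcomp : ∀ n, IsCompact (K n ∩ (U ∪ V)ᶜ) :=
      fun n => (hcomp n).inter_right (hU.union hV).isClosed_compl
    have hZcl : ∀ n, IsClosed (K n ∩ (U ∪ V)ᶜ) :=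
      fun n => ((hcomp n).isClosed).inter (hU.union hV).isClosed_compl
    have hdir : Directed (· ⊇ ·) (fun n => K n ∩ (U ∪ V)ᶜ) := by
      intro m k
      exact ⟨max m k, inter_subset_inter_left _ (hanti (le_max_left m k)),
        inter_subset_inter_left _ (hanti (le_max_right m k))⟩
    obtain ⟨z, hz⟩ := IsCompact.nonempty_iInter_of_directed_nonempty_isCompact_isClosed
      _ hdir hne' hZcomp hZcl
    simp only [mem_iInter, mem_inter_iff] at hz
    have hzs : z ∈ s := mem_iInter.mpr fun i => (hz i).1
    exact (hz 0).2 (hsUV hzs)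
  obtain ⟨n, hKnUV⟩ := hKn
  have haU : a ∈ U := hAU ⟨has, fun hav => by
    have : a ∈ s ∩ (u ∩ v) := ⟨has, hau, hav⟩
    simp [hne] at this⟩
  have hbV : b ∈ V := hBV ⟨hbs, fun hbu => by
    have : b ∈ s ∩ (u ∩ v) := ⟨hbs, hbu, hbv⟩
    simp [hne] at this⟩
  have := hconn n U V hU hV hKnUV
    ⟨a, (mem_iInter.mp has n), haU⟩ ⟨b, (mem_iInter.mp hbs n), hbV⟩
  obtain ⟨z, _, hzU, hzV⟩ := this
  exact (disjoint_left.mp hUV hzU) hzV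

/-- Let `Ω ⊂ ℝⁿ` be a connected open set, `y₀ ∈ ℝⁿ`, and `f : Ω → ℝⁿ` continuous with
`f⁻¹{y₀}` totally disconnected. Then for every `x ∈ f⁻¹{y₀}` there is `ε > 0` such that
the connected component of `f⁻¹(B(y₀, ε))` containing `x` has compact closure
contained in `Ω`. -/
theorem component_compactly_contained (n : ℕ)
    (Ω : Set (EuclideanSpace ℝ (Fin n))) (hΩo : IsOpen Ω) (hΩc : IsConnected Ω)
    (y₀ : EuclideanSpace ℝ (Fin n))
    (f : EuclideanSpace ℝ (Fin n) → EuclideanSpace ℝ (Fin n))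
    (hf : ContinuousOn f Ω)
    (hfib : IsTotallyDisconnected (Ω ∩ f ⁻¹' {y₀})) :
    ∀ x ∈ Ω ∩ f ⁻¹' {y₀}, ∃ ε > (0:ℝ),
      IsCompact (closure (connectedComponentIn (Ω ∩ f ⁻¹' ball y₀ ε) x)) ∧
      closure (connectedComponentIn (Ω ∩ f ⁻¹' ball y₀ ε) x) ⊆ Ω := by
  rintro x ⟨hxΩ, hxf⟩
  have hfx : f x = y₀ := hxf
  -- pick r > 0 with closedBall x r ⊆ Ω
  obtain ⟨r₀, hr₀, hball⟩ := Metric.isOpen_iff.mp hΩo x hxΩ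
  set r : ℝ := r₀ / 2 with hrdef
  have hr : 0 < r := by positivity
  have hSΩ : closedBall x r ⊆ Ω := fun z hz =>
    hball (lt_of_le_of_lt (mem_closedBall.mp hz) (by linarith))
  set S : Set (EuclideanSpace ℝ (Fin n)) := closedBall x r with hSdef
  have hScomp : IsCompact S := isCompact_closedBall x r
  -- the compact sets K i and their components C i
  set K : ℕ → Set (EuclideanSpace ℝ (Fin n)) :=
    fun i => S ∩ f ⁻¹' closedBall y₀ (1 / (i + 1)) with hKdef
  have hKS : ∀ i, K i ⊆ S := fun i => inter_subset_left
  have hKcomp : ∀ i, IsCompact (K i) := by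
    intro i
    have hclosed : IsClosed (K i) :=
      (hf.mono hSΩ).preimage_isClosed_of_isClosed isClosed_closedBall Metric.isClosed_closedBall
    exact hScomp.of_isClosed_subset hclosed (hKS i)
  have hxK : ∀ i, x ∈ K i := by
    intro i
    refine ⟨mem_closedBall_self hr.le, ?_⟩
    simp only [mem_preimage, hfx]
    exact mem_closedBall_self (by positivity)
  have hKanti : Antitone K := by
    intro i j hij
    refine inter_subset_inter_right _ (preimage_mono (closedBall_subset_closedBall ?_))
    apply one_div_le_one_div_of_le (by positivity)
    exact_mod_cast Nat.add_le_add_right hij 1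
  set C : ℕ → Set (EuclideanSpace ℝ (Fin n)) := fun i => connectedComponentIn (K i) x
    with hCdef
  have hCn : ∀ i, x ∈ C i := fun i => mem_connectedComponentIn (hxK i)
  have hCK : ∀ i, C i ⊆ K i := fun i => connectedComponentIn_subset _ _
  have hCconn : ∀ i, IsPreconnected (C i) := fun i => isPreconnected_connectedComponentIn
  have hCcomp : ∀ i, IsCompact (C i) := by
    intro i
    haveI : CompactSpace (K i) := isCompact_iff_compactSpace.mp (hKcomp i)
    rw [hCdef]
    simp only
    rw [connectedComponentIn_eq_image (hxK i)]
    exact (isClosed_connectedComponent.isCompact).image continuous_subtype_val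
  have hCanti : Antitone C := by
    intro i j hij
    exact (hCconn j).subset_connectedComponentIn (hCn j) ((hCK j).trans (hKanti hij))
  -- the intersection is {x}
  set s : Set (EuclideanSpace ℝ (Fin n)) := ⋂ i, C i with hsdef
  have hsconn : IsPreconnected s := isPreconnected_iInter_antitone hCanti hCcomp hCconn
  have hsfib : s ⊆ Ω ∩ f ⁻¹' {y₀} := by
    intro z hz
    have hzK : ∀ i, z ∈ K i := fun i => hCK i (mem_iInter.mp hz i)
    refine ⟨hSΩ (hKS 0 (hzK 0)), ?_⟩
    simp only [mem_preimage, mem_singleton_iff]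
    have hdist : ∀ i : ℕ, dist (f z) y₀ ≤ 1 / (i + 1) := fun i =>
      mem_closedBall.mp (hzK i).2
    have : dist (f z) y₀ ≤ 0 := by
      by_contra h
      push_neg at h
      obtain ⟨i, hi⟩ := exists_nat_one_div_lt h
      exact absurd (hdist i) (not_le.mpr hi)
    exact dist_le_zero.mp this
  have hssub : s.Subsingleton := hfib s hsfib hsconn
  have hxs : x ∈ s := mem_iInter.mpr hCn
  have hs_eq : s ⊆ {x} := fun z hz => hssub hz hxs
  -- find i₀ with C i₀ ⊆ ball x r
  have hCi : ∃ i, C i ⊆ ball x r := by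
    by_contra hcon
    push_neg at hcon
    have hne : ∀ i, (C i ∩ (ball x r)ᶜ).Nonempty := by
      intro i
      obtain ⟨z, hz, hz'⟩ := Set.not_subset.mp (hcon i)
      exact ⟨z, hz, hz'⟩
    have hdir : Directed (· ⊇ ·) (fun i => C i ∩ (ball x r)ᶜ) := by
      intro m k
      exact ⟨max m k, inter_subset_inter_left _ (hCanti (le_max_left m k)),
        inter_subset_inter_left _ (hCanti (le_max_right m k))⟩
    obtain ⟨z, hz⟩ := IsCompact.nonempty_iInter_of_directed_nonempty_isCompact_isClosed
      _ hdir hne (fun i => (hCcomp i).inter_right isOpen_ball.isClosed_compl)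
      (fun i => (hCcomp i).isClosed.inter isOpen_ball.isClosed_compl)
    simp only [mem_iInter, mem_inter_iff] at hz
    have hzs : z ∈ s := mem_iInter.mpr fun i => (hz i).1
    have : z = x := hs_eq hzs
    exact (hz 0).2 (this ▸ mem_ball_self hr)
  obtain ⟨i₀, hCi₀⟩ := hCi
  refine ⟨1 / (i₀ + 1), by positivity, ?_⟩
  set ε : ℝ := 1 / (i₀ + 1) with hεdef
  set G : Set (EuclideanSpace ℝ (Fin n)) := Ω ∩ f ⁻¹' ball y₀ ε with hGdef
  have hGopen : IsOpen G := hf.isOpen_inter_preimage hΩo isOpen_ball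
  have hxG : x ∈ G := ⟨hxΩ, by simp [mem_preimage, hfx, mem_ball_self, show (0:ℝ) < ε by positivity]⟩
  set D : Set (EuclideanSpace ℝ (Fin n)) := connectedComponentIn G x with hDdef
  have hDopen : IsOpen D := hGopen.connectedComponentIn
  have hxD : x ∈ D := mem_connectedComponentIn hxG
  have hDG : D ⊆ G := connectedComponentIn_subset _ _
  -- the component C' of x in D ∩ ball x r
  set W : Set (EuclideanSpace ℝ (Fin n)) := D ∩ ball x r with hWdef
  have hWopen : IsOpen W := hDopen.inter isOpen_ball
  set C' : Set (EuclideanSpace ℝ (Fin n)) := connectedComponentIn W x with hC'def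
  have hxW : x ∈ W := ⟨hxD, mem_ball_self hr⟩
  have hxC' : x ∈ C' := mem_connectedComponentIn hxW
  have hC'open : IsOpen C' := hWopen.connectedComponentIn
  have hC'W : C' ⊆ W := connectedComponentIn_subset _ _
  -- C' ⊆ C i₀
  have hC'C : C' ⊆ C i₀ := by
    apply isPreconnected_connectedComponentIn.subset_connectedComponentIn hxC'
    intro z hz
    refine ⟨ball_subset_closedBall (hC'W hz).2, ?_⟩
    have := (hDG (hC'W hz).1).2
    exact preimage_mono ball_subset_closedBall this
  -- D ⊆ closure C', hence D ⊆ ball x r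
  have hDsub : D ⊆ ball x r := by
    have hclC' : closure C' ⊆ C i₀ := (hCcomp i₀).isClosed.closure_subset_iff.mpr hC'C
    have hkey : D ⊆ closure C' := by
      by_contra hcon
      have hDuv : D ⊆ C' ∪ (closure C')ᶜ := by
        intro z hzD
        by_cases hzc : z ∈ closure C'
        · left
          -- closure C' ∩ D ⊆ C'
          have hT : (closure C' ∩ D) ⊆ C' := by
            have hTconn : IsPreconnected (closure C' ∩ D) := by
              apply isPreconnected_connectedComponentIn.subset_closure
                (subset_inter subset_closure (hC'W.trans inter_subset_left))
              exact inter_subset_left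
            apply hTconn.subset_connectedComponentIn ⟨subset_closure hxC', hxD⟩
            intro w ⟨hw1, hw2⟩
            exact ⟨hw2, ball_subset_ball le_rfl (hCi₀ (hclC' hw1))⟩
          exact hT ⟨hzc, hzD⟩
        · right; exact hzc
      have hprec : IsPreconnected D := isPreconnected_connectedComponentIn
      have hne1 : (D ∩ C').Nonempty := ⟨x, hxD, hxC'⟩
      have hne2 : (D ∩ (closure C')ᶜ).Nonempty := by
        rw [Set.not_subset] at hcon
        obtain ⟨z, hz1, hz2⟩ := hcon
        exact ⟨z, hz1, hz2⟩
      obtain ⟨z, _, hz1, hz2⟩ := hprec C' (closure C')ᶜ hC'open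
        isClosed_closure.isOpen_compl hDuv hne1 hne2
      exact hz2 (subset_closure hz1)
    intro z hz
    exact hCi₀ (hclC' (hkey hz))
  -- conclude
  have hclD : closure D ⊆ closedBall x r := by
    calc closure D ⊆ closure (ball x r) := closure_mono hDsub
    _ ⊆ closedBall x r := closure_ball_subset_closedBall
  exact ⟨hScomp.of_isClosed_subset isClosed_closure hclD, hclD.trans hSΩ⟩
end

section
/- Let Ω ⊂ ℝⁿ be a connected open set, y₀ ∈ ℝⁿ, and f : Ω → ℝⁿ continuous with f⁻¹{y₀} totally disconnected. Then for all distinct x₁, x₂ ∈ f⁻¹{y₀} there exists ε > 0 such that x₁ and x₂ lie in different connected components of f⁻¹(B(y₀, ε)). -/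
open Metric Set

set_option maxHeartbeats 1000000 in
/-- Let `Ω ⊂ ℝⁿ` be a connected open set, `y₀ ∈ ℝⁿ`, and `f : Ω → ℝⁿ` continuous with
`f⁻¹{y₀}` totally disconnected. Then any two distinct points `x₁, x₂ ∈ f⁻¹{y₀}` lie in
different connected components of `f⁻¹(B(y₀, ε))` for some `ε > 0`. -/
theorem distinct_points_in_different_components (n : ℕ)
    (Ω : Set (EuclideanSpace ℝ (Fin n))) (hΩo : IsOpen Ω) (hΩc : IsConnected Ω)
    (y₀ : EuclideanSpace ℝ (Fin n))
    (f : EuclideanSpace ℝ (Fin n) → EuclideanSpace ℝ (Fin n))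
    (hf : ContinuousOn f Ω)
    (hfib : IsTotallyDisconnected (Ω ∩ f ⁻¹' {y₀})) :
    ∀ x₁ ∈ Ω ∩ f ⁻¹' {y₀}, ∀ x₂ ∈ Ω ∩ f ⁻¹' {y₀}, x₁ ≠ x₂ →
      ∃ ε > (0:ℝ), x₂ ∉ connectedComponentIn (Ω ∩ f ⁻¹' ball y₀ ε) x₁ := by
  intro x₁ hx₁ x₂ hx₂ hne
  by_contra hcon
  push_neg at hcon
  set F : Set (EuclideanSpace ℝ (Fin n)) := Ω ∩ f ⁻¹' {y₀} with hFdef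
  obtain ⟨hx₁Ω, hx₁f⟩ := hx₁
  obtain ⟨hx₂Ω, hx₂f⟩ := hx₂
  have hfx₁ : f x₁ = y₀ := hx₁f
  have hfx₂ : f x₂ = y₀ := hx₂f
  -- choose a radius ρ so that closedBall x₁ ρ ⊆ Ω and x₂ ∉ ball x₁ ρ
  obtain ⟨ρ₀, hρ₀pos, hρ₀⟩ := Metric.isOpen_iff.1 hΩo x₁ hx₁Ω
  have hdpos : 0 < dist x₁ x₂ := dist_pos.2 hne
  set ρ : ℝ := min (ρ₀ / 2) (dist x₁ x₂ / 2) with hρdef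
  have hρpos : 0 < ρ := lt_min (by linarith) (by linarith)
  have hρlt : ρ < ρ₀ := lt_of_le_of_lt (min_le_left _ _) (by linarith)
  have hballΩ : closedBall x₁ ρ ⊆ Ω := fun z hz =>
    hρ₀ (lt_of_le_of_lt (mem_closedBall.1 hz) hρlt)
  -- W is a compact totally disconnected neighborhood of x₁ inside the fiber
  set W : Set (EuclideanSpace ℝ (Fin n)) := F ∩ closedBall x₁ ρ with hWdef
  have hWsub : W ⊆ F := inter_subset_left
  have hWclosed : IsClosed W := by
    have : W = closedBall x₁ ρ ∩ f ⁻¹' {y₀} := by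
      ext z
      constructor
      · rintro ⟨⟨hzΩ, hzf⟩, hzb⟩; exact ⟨hzb, hzf⟩
      · rintro ⟨hzb, hzf⟩; exact ⟨⟨hballΩ hzb, hzf⟩, hzb⟩
    rw [this]
    exact (hf.mono hballΩ).preimage_isClosed_of_isClosed isClosed_closedBall isClosed_singleton
  have hWcomp : IsCompact W :=
    (isCompact_closedBall x₁ ρ).of_isClosed_subset hWclosed inter_subset_right
  have hx₁W : x₁ ∈ W := ⟨⟨hx₁Ω, hx₁f⟩, mem_closedBall_self hρpos.le⟩
  have hWtd : IsTotallyDisconnected W := fun t ht h't =>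
    hfib t (ht.trans hWsub) h't
  -- pass to the subtype to obtain a clopen set
  haveI : T2Space W := inferInstance
  haveI : CompactSpace W := isCompact_iff_compactSpace.1 hWcomp
  haveI : TotallyDisconnectedSpace W := totallyDisconnectedSpace_subtype_iff.2 hWtd
  have hOopen : IsOpen ((Subtype.val : W → _) ⁻¹' ball x₁ ρ) :=
    (isOpen_ball).preimage continuous_subtype_val
  have hx₁O : (⟨x₁, hx₁W⟩ : W) ∈ (Subtype.val : W → _) ⁻¹' ball x₁ ρ :=
    Set.mem_preimage.mpr (mem_ball_self hρpos)
  obtain ⟨V', hV'clopen, hx₁V', hV'O⟩ := compact_exists_isClopen_in_isOpen hOopen hx₁O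
  -- V' is open in W, hence of the form (val ⁻¹' S) with S open, S ⊆ can be intersected with ball
  obtain ⟨S₀, hS₀open, hS₀⟩ := isOpen_induced_iff.1 hV'clopen.2
  set S : Set (EuclideanSpace ℝ (Fin n)) := S₀ ∩ ball x₁ ρ with hSdef
  have hSopen : IsOpen S := hS₀open.inter isOpen_ball
  have hV'S : V' = (Subtype.val : W → _) ⁻¹' S := by
    apply Subset.antisymm
    · intro z hz
      have hz' : z ∈ (Subtype.val : W → _) ⁻¹' S₀ := by rw [hS₀]; exact hz
      exact ⟨hz', hV'O hz⟩
    · rintro z ⟨h1, -⟩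
      rw [← hS₀]
      exact h1
  set V : Set (EuclideanSpace ℝ (Fin n)) := Subtype.val '' V' with hVdef
  have hVW : V ⊆ W := by rintro z ⟨w, _, rfl⟩; exact w.2
  have hVF : V ⊆ F := hVW.trans hWsub
  have hVcomp : IsCompact V :=
    (hV'clopen.1.isCompact).image continuous_subtype_val
  have hx₁V : x₁ ∈ V := ⟨⟨x₁, hx₁W⟩, hx₁V', rfl⟩
  have hVne : V.Nonempty := ⟨x₁, hx₁V⟩
  have hVeq : V = F ∩ S := by
    rw [hVdef, hV'S, Subtype.image_preimage_coe]
    ext z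
    constructor
    · rintro ⟨⟨hzF, _⟩, hzS⟩; exact ⟨hzF, hzS⟩
    · rintro ⟨hzF, hzS⟩; exact ⟨⟨hzF, ball_subset_closedBall hzS.2⟩, hzS⟩
  have hx₂V : x₂ ∉ V := by
    intro h
    have : x₂ ∈ ball x₁ ρ := (hVeq ▸ h).2.2
    have : dist x₂ x₁ < ρ := mem_ball.1 this
    have hρle : ρ ≤ dist x₁ x₂ / 2 := min_le_right _ _
    rw [dist_comm] at this
    linarith
  -- the open set U = (Ω \ F) ∪ V
  set U : Set (EuclideanSpace ℝ (Fin n)) := (Ω \ F) ∪ V with hUdef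
  have hΩFopen : IsOpen (Ω \ F) := by
    have : Ω \ F = Ω ∩ f ⁻¹' ({y₀}ᶜ) := by
      ext z
      constructor
      · rintro ⟨hzΩ, hzF⟩
        refine ⟨hzΩ, fun hzf => hzF ⟨hzΩ, hzf⟩⟩
      · rintro ⟨hzΩ, hzf⟩
        exact ⟨hzΩ, fun h => hzf h.2⟩
    rw [this]
    exact hf.isOpen_inter_preimage hΩo isClosed_singleton.isOpen_compl
  have hUopen : IsOpen U := by
    have : U = (Ω \ F) ∪ (S ∩ Ω) := by
      rw [hUdef, hVeq]
      ext z
      constructor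
      · rintro (h | ⟨hzF, hzS⟩)
        · exact Or.inl h
        · exact Or.inr ⟨hzS, hzF.1⟩
      · rintro (h | ⟨hzS, hzΩ⟩)
        · exact Or.inl h
        · by_cases hzF : z ∈ F
          · exact Or.inr ⟨hzF, hzS⟩
          · exact Or.inl ⟨hzΩ, hzF⟩
    rw [this]
    exact hΩFopen.union (hSopen.inter hΩo)
  have hUΩ : U ⊆ Ω := by
    rintro z (h | h)
    · exact h.1
    · exact (hVF h).1
  have hVU : V ⊆ U := subset_union_right
  obtain ⟨r, hrpos, hthick⟩ := hVcomp.exists_thickening_subset_open hUopen hVU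
  have hx₂U : x₂ ∉ U := by
    rintro (h | h)
    · exact h.2 ⟨hx₂Ω, hx₂f⟩
    · exact hx₂V h
  have hx₂dist : r ≤ infDist x₂ V := by
    by_contra h
    push_neg at h
    exact hx₂U (hthick ((mem_thickening_iff_infDist_lt hVne).2 h))
  -- for each k, find a point at infDist r/2 from V in the component of x₁
  have key : ∀ k : ℕ, ∃ z, z ∈ Ω ∧ dist (f z) y₀ < 1 / (k + 1) ∧ infDist z V = r / 2 := by
    intro k
    have hεpos : (0:ℝ) < 1 / (k + 1) := by positivity
    set G : Set (EuclideanSpace ℝ (Fin n)) := Ω ∩ f ⁻¹' ball y₀ (1 / (k + 1)) with hGdef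
    have hx₁G : x₁ ∈ G := ⟨hx₁Ω, by
      simp only [mem_preimage, hfx₁]; exact mem_ball_self hεpos⟩
    have hx₁C : x₁ ∈ connectedComponentIn G x₁ := mem_connectedComponentIn hx₁G
    have hx₂C : x₂ ∈ connectedComponentIn G x₁ := hcon _ hεpos
    have hCG : connectedComponentIn G x₁ ⊆ G := connectedComponentIn_subset G x₁
    have hIVT := isPreconnected_connectedComponentIn.intermediate_value hx₁C hx₂C
      ((continuous_infDist_pt V).continuousOn :
        ContinuousOn (fun z => infDist z V) (connectedComponentIn G x₁))
    have hmem : r / 2 ∈ Icc (infDist x₁ V) (infDist x₂ V) := by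
      rw [infDist_zero_of_mem hx₁V]
      constructor
      · linarith
      · linarith
    obtain ⟨z, hzC, hz⟩ := hIVT hmem
    exact ⟨z, (hCG hzC).1, by simpa using (hCG hzC).2, hz⟩
  choose z hzΩ hzf hzd using key
  -- the points z k live in a compact set
  have hzthick : ∀ k, z k ∈ thickening r V := fun k =>
    (mem_thickening_iff_infDist_lt hVne).2 (by rw [hzd k]; linarith)
  have hzK : ∀ k, z k ∈ cthickening r V := fun k =>
    thickening_subset_cthickening r V (hzthick k)
  obtain ⟨a, haK, φ, hφ, hconv⟩ := (hVcomp.cthickening).tendsto_subseq hzK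
  -- the limit has infDist a V = r/2
  have hinfa : infDist a V = r / 2 := by
    have h1 : Filter.Tendsto (fun k => infDist (z (φ k)) V) Filter.atTop
        (nhds (infDist a V)) := ((continuous_infDist_pt V).tendsto a).comp hconv
    have h2 : (fun k => infDist (z (φ k)) V) = fun _ => r / 2 := funext fun k => hzd (φ k)
    rw [h2] at h1
    exact tendsto_nhds_unique h1 tendsto_const_nhds
  have haU : a ∈ U := hthick ((mem_thickening_iff_infDist_lt hVne).2 (by rw [hinfa]; linarith))
  have haΩ : a ∈ Ω := hUΩ haU
  -- f a = y₀
  have hfa : f a = y₀ := by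
    have hfc : Filter.Tendsto (fun k => f (z (φ k))) Filter.atTop (nhds (f a)) :=
      ((hf.continuousAt (hΩo.mem_nhds haΩ)).tendsto).comp hconv
    have hdist : Filter.Tendsto (fun k => dist (f (z (φ k))) y₀) Filter.atTop
        (nhds (dist (f a) y₀)) := hfc.dist tendsto_const_nhds
    have hbound : ∀ k : ℕ, dist (f (z (φ k))) y₀ ≤ 1 / (k + 1) := by
      intro k
      have h1 : dist (f (z (φ k))) y₀ < 1 / (φ k + 1) := hzf (φ k)
      have h2 : (1 : ℝ) / (φ k + 1) ≤ 1 / (k + 1) := by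
        apply one_div_le_one_div_of_le
        · positivity
        · have hk : (k : ℝ) ≤ (φ k : ℝ) := Nat.cast_le.2 hφ.le_apply
          linarith
      linarith
    have hzero : Filter.Tendsto (fun k => dist (f (z (φ k))) y₀) Filter.atTop (nhds 0) :=
      squeeze_zero (fun k => dist_nonneg) hbound tendsto_one_div_add_atTop_nhds_zero_nat
    have : dist (f a) y₀ = 0 := tendsto_nhds_unique hdist hzero
    exact dist_eq_zero.1 this
  -- contradiction
  have haF : a ∈ F := ⟨haΩ, hfa⟩
  have haV : a ∉ V := fun h => by
    rw [infDist_zero_of_mem h] at hinfa; linarith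
  rcases haU with h | h
  · exact h.2 haF
  · exact haV h
end

section
/- Let t₀ = 0 and recursively t_{2k-1} = t_{2k-2} + (2^{k-1} − h(t_{2k-2})) and t_{2k} = t_{2k-1} + (2^{k-1} − 2^{-k}), defining a piecewise linear function h : [0,∞) → ℝ with h(0) = 0, slope +1 on each (t_{2k}, t_{2k+1}), slope −1 on each (t_{2k+1}, t_{2k+2}), h(t_{2k-1}) = 2^{k-1}, and h(t_{2k}) = 2^{-k}. Then such a strictly increasing sequence (t_j) exists, h is 1-Lipschitz, h(t) > 0 for all t > 0, and limsup_{t→∞} h(t) = ∞ while liminf_{t→∞} h(t) = 0. -/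
open Set Filter

namespace Zigzag

attribute [local instance] Classical.propDecidable

noncomputable def v : ℕ → ℝ := fun j =>
  if j % 2 = 1 then 2 ^ (j / 2) else if j = 0 then 0 else (2:ℝ)⁻¹ ^ (j / 2)

noncomputable def eps (j : ℕ) : ℝ := if j % 2 = 0 then 1 else -1

noncomputable def d (j : ℕ) : ℝ := eps j * (v (j+1) - v j)

noncomputable def tt : ℕ → ℝ
  | 0 => 0
  | (j+1) => tt j + d j

lemma tt_succ (j : ℕ) : tt (j+1) = tt j + d j := rfl

lemma v_zero : v 0 = 0 := by simp [v]

lemma v_odd (k : ℕ) : v (2*k+1) = 2 ^ k := by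
  have h1 : (2*k+1) % 2 = 1 := by omega
  have h2 : (2*k+1) / 2 = k := by omega
  simp [v, h1, h2]

lemma v_even (k : ℕ) (hk : 1 ≤ k) : v (2*k) = (2:ℝ)⁻¹ ^ k := by
  have h1 : (2*k) % 2 = 0 := by omega
  have h2 : (2*k) / 2 = k := by omega
  have h3 : 2*k ≠ 0 := by omega
  simp [v, h1, h2, h3]

lemma v_nonneg (j : ℕ) : 0 ≤ v j := by
  unfold v; split
  · positivity
  · split
    · exact le_refl 0
    · positivity

lemma v_pos (j : ℕ) (hj : 1 ≤ j) : 0 < v j := by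
  unfold v; split
  · positivity
  · split
    · next h => exact absurd h (by omega)
    · positivity

lemma eps_sq (j : ℕ) : eps j * eps j = 1 := by unfold eps; split <;> norm_num

lemma abs_eps (j : ℕ) : |eps j| = 1 := by unfold eps; split <;> norm_num

lemma d_ge (j : ℕ) : (1:ℝ)/2 ≤ d j := by
  rcases Nat.even_or_odd j with ⟨k, hk⟩ | ⟨k, hk⟩
  · subst hk
    have hj : k + k = 2 * k := by ring
    have he : eps (2*k) = 1 := by unfold eps; simp [Nat.mul_mod_right]
    rw [hj, d, he, one_mul, v_odd]
    rcases Nat.eq_zero_or_pos k with rfl | hk1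
    · norm_num [v_zero]
    · rw [v_even k hk1]
      have h1 : (2:ℝ)⁻¹ ^ k ≤ (2:ℝ)⁻¹ ^ 1 := by
        apply pow_le_pow_of_le_one (by norm_num) (by norm_num) hk1
      have h2 : (1:ℝ) ≤ 2 ^ k := one_le_pow₀ (by norm_num)
      norm_num at h1 ⊢; linarith
  · subst hk
    have he : eps (2*k+1) = -1 := by
      unfold eps; have : (2*k+1) % 2 = 1 := by omega
      simp [this]
    have h22 : 2*k+1+1 = 2*(k+1) := by ring
    rw [d, he, h22, v_odd, v_even (k+1) (by omega)]
    have h1 : (2:ℝ)⁻¹ ^ (k+1) ≤ (2:ℝ)⁻¹ ^ 1 := by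
      apply pow_le_pow_of_le_one (by norm_num) (by norm_num) (by omega)
    have h2 : (1:ℝ) ≤ 2 ^ k := one_le_pow₀ (by norm_num)
    norm_num at h1 ⊢; linarith

lemma tt_strictMono : StrictMono tt := by
  apply strictMono_nat_of_lt_succ
  intro j; rw [tt_succ]; have := d_ge j; linarith

lemma tt_ge (j : ℕ) : (j:ℝ)/2 ≤ tt j := by
  induction j with
  | zero => simp [tt]
  | succ n ih =>
    rw [tt_succ]; have := d_ge n; push_cast; linarith

lemma tt_nonneg (j : ℕ) : 0 ≤ tt j := le_trans (by positivity) (tt_ge j)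

lemma exists_lt (s : ℝ) : ∃ j, s < tt (j+1) := by
  obtain ⟨n, hn⟩ := exists_nat_gt (2*s)
  refine ⟨n, lt_of_lt_of_le ?_ (tt_ge (n+1))⟩
  push_cast; linarith

noncomputable def nn (s : ℝ) : ℕ := Nat.find (exists_lt s)

lemma lt_tt_nn_succ (s : ℝ) : s < tt (nn s + 1) := Nat.find_spec (exists_lt s)

lemma tt_nn_le {s : ℝ} (hs : 0 ≤ s) : tt (nn s) ≤ s := by
  rcases Nat.eq_zero_or_pos (nn s) with h | h
  · rw [h]; exact hs
  · obtain ⟨m, hm⟩ := Nat.exists_eq_succ_of_ne_zero (by omega : nn s ≠ 0)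
    have := Nat.find_min (exists_lt s) (by omega : m < nn s)
    rw [hm]; exact not_lt.1 (by simpa [← hm] using this)

lemma nn_eq {s : ℝ} {j : ℕ} (h1 : tt j ≤ s) (h2 : s < tt (j+1)) : nn s = j := by
  refine Nat.find_eq_iff (exists_lt s) |>.2 ⟨h2, fun m hm => not_lt.2 ?_⟩
  exact le_trans (tt_strictMono.monotone (by omega : m + 1 ≤ j)) h1

noncomputable def hh (s : ℝ) : ℝ := v (nn s) + eps (nn s) * (s - tt (nn s))

lemma key (j : ℕ) : v (j+1) = v j + eps j * (tt (j+1) - tt j) := by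
  have e2 := eps_sq j
  rw [tt_succ, d]
  linear_combination (v j - v (j+1)) * e2

lemma hh_tt (j : ℕ) : hh (tt j) = v j := by
  have h := nn_eq (le_refl (tt j)) (tt_strictMono (by omega : j < j+1))
  simp [hh, h]

lemma hh_seg {j : ℕ} {s : ℝ} (h1 : tt j ≤ s) (h2 : s ≤ tt (j+1)) :
    hh s = v j + eps j * (s - tt j) := by
  rcases lt_or_eq_of_le h2 with h2' | rfl
  · have h := nn_eq h1 h2'
    simp [hh, h]
  · rw [hh_tt]; exact key j

lemma nn_mono {x y : ℝ} (hxy : x ≤ y) : nn x ≤ nn y :=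
  Nat.find_le (lt_of_le_of_lt hxy (lt_tt_nn_succ y))

lemma lip_aux : ∀ k : ℕ, ∀ x y : ℝ, 0 ≤ x → x ≤ y → nn y ≤ nn x + k →
    |hh y - hh x| ≤ y - x := by
  intro k
  induction k with
  | zero =>
    intro x y hx hxy hk
    have hj : nn y = nn x := le_antisymm (by omega) (nn_mono hxy)
    have : hh y - hh x = eps (nn x) * (y - x) := by
      simp only [hh, hj]; ring
    rw [this, abs_mul, abs_eps, one_mul, abs_of_nonneg (by linarith)]
  | succ k ih =>
    intro x y hx hxy hk
    by_cases hc : nn y ≤ nn x + k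
    · exact ih x y hx hxy hc
    have hgap : nn x + 1 ≤ nn y := by omega
    set j := nn x with hjdef
    set m := tt (j+1) with hmdef
    have hxm : x ≤ m := le_of_lt (lt_tt_nn_succ x)
    have hmy : m ≤ y := le_trans (tt_strictMono.monotone hgap) (tt_nn_le (le_trans hx hxy))
    have hm0 : 0 ≤ m := le_trans hx hxm
    have hnnm : nn m = j + 1 := nn_eq (le_refl _) (tt_strictMono (by omega))
    have hhm : hh m = v (j+1) := hh_tt (j+1)
    have h1 : |hh m - hh x| = m - x := by
      have hx' : hh x = v j + eps j * (x - tt j) := rfl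
      have : hh m - hh x = eps j * (m - x) := by
        rw [hhm, hx', key j, ← hmdef]; ring
      rw [this, abs_mul, abs_eps, one_mul, abs_of_nonneg (by linarith)]
    have h2 : |hh y - hh m| ≤ y - m := ih m y hm0 hmy (by omega)
    calc |hh y - hh x| ≤ |hh y - hh m| + |hh m - hh x| := abs_sub_le _ _ _
      _ ≤ (y - m) + (m - x) := add_le_add h2 (le_of_eq h1)
      _ = y - x := by ring

lemma hh_lipschitz : LipschitzOnWith 1 hh (Ici 0) := by
  rw [lipschitzOnWith_iff_dist_le_mul]
  intro x hx y hy
  simp only [NNReal.coe_one, one_mul, Real.dist_eq]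
  have hx0 : (0:ℝ) ≤ x := hx
  have hy0 : (0:ℝ) ≤ y := hy
  rcases le_total x y with h | h
  · have h1 := lip_aux (nn y) x y hx0 h (by omega)
    rw [abs_sub_comm] at h1
    rw [abs_of_nonpos (by linarith : x - y ≤ 0), neg_sub]
    exact h1
  · have h1 := lip_aux (nn x) y x hy0 h (by omega)
    rw [abs_of_nonneg (by linarith : (0:ℝ) ≤ x - y)]
    exact h1

lemma hh_pos {s : ℝ} (hs : 0 < s) : 0 < hh s := by
  have h1 : tt (nn s) ≤ s := tt_nn_le (le_of_lt hs)
  have h2 : s < tt (nn s + 1) := lt_tt_nn_succ s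
  rcases Nat.even_or_odd (nn s) with ⟨k, hk⟩ | ⟨k, hk⟩
  · have he : eps (nn s) = 1 := by
      unfold eps
      have hm : nn s % 2 = 0 := by omega
      simp [hm]
    rcases Nat.eq_zero_or_pos (nn s) with h0 | h0
    · have htt : tt (nn s) = 0 := by rw [h0]; rfl
      have hv : v (nn s) = 0 := by rw [h0]; exact v_zero
      simp only [hh, he, one_mul, htt, hv]
      linarith
    · have hv := v_pos (nn s) h0
      have : 0 ≤ s - tt (nn s) := by linarith
      simp only [hh, he, one_mul]; linarith
  · have he : eps (nn s) = -1 := by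
      unfold eps
      have hm : nn s % 2 ≠ 0 := by omega
      simp [hm]
    have hkey := key (nn s)
    rw [he] at hkey
    have hv : 0 < v (nn s + 1) := v_pos _ (by omega)
    simp only [hh, he]
    nlinarith [hkey, h2]

lemma two_pow_ge (k : ℕ) : (k:ℝ) ≤ 2 ^ k := by
  exact_mod_cast le_of_lt (Nat.lt_two_pow_self (n := k))

theorem main :
    ∃ t : ℕ → ℝ, StrictMono t ∧ t 0 = 0 ∧
      ∃ h : ℝ → ℝ, h 0 = 0 ∧ LipschitzOnWith 1 h (Ici 0) ∧
        (∀ k : ℕ, h (t (2 * k + 1)) = 2 ^ k) ∧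
        (∀ k : ℕ, 1 ≤ k → h (t (2 * k)) = (2 : ℝ)⁻¹ ^ k) ∧
        (∀ k : ℕ, ∀ s ∈ Icc (t (2 * k)) (t (2 * k + 1)),
          h s = h (t (2 * k)) + (s - t (2 * k))) ∧
        (∀ k : ℕ, ∀ s ∈ Icc (t (2 * k + 1)) (t (2 * k + 2)),
          h s = h (t (2 * k + 1)) - (s - t (2 * k + 1))) ∧
        (∀ s : ℝ, 0 < s → 0 < h s) ∧
        (∀ M : ℝ, ∃ᶠ s in atTop, M < h s) ∧
        (∀ ε : ℝ, 0 < ε → ∃ᶠ s in atTop, h s < ε) := by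
  refine ⟨tt, tt_strictMono, rfl, hh, ?_, hh_lipschitz, ?_, ?_, ?_, ?_, fun s hs => hh_pos hs, ?_, ?_⟩
  · have h0 : (0:ℝ) = tt 0 := rfl
    rw [h0, hh_tt, v_zero]
    exact h0
  · intro k; rw [hh_tt, v_odd]
  · intro k hk; rw [hh_tt, v_even k hk]
  · intro k s hs
    have he : eps (2*k) = 1 := by unfold eps; simp [Nat.mul_mod_right]
    rw [hh_seg hs.1 hs.2, hh_tt, he, one_mul]
  · intro k s hs
    have he : eps (2*k+1) = -1 := by
      unfold eps
      have hm : (2*k+1) % 2 ≠ 0 := by omega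
      simp [hm]
    rw [hh_seg hs.1 hs.2, hh_tt, he]; ring
  · intro M
    rw [frequently_atTop]
    intro a
    obtain ⟨n, hn⟩ := exists_nat_gt (max a M)
    refine ⟨tt (2*n+1), ?_, ?_⟩
    · refine le_trans ?_ (tt_ge (2*n+1))
      have := le_max_left a M
      push_cast; linarith [hn]
    · rw [hh_tt, v_odd]
      have h1 : M < (n:ℝ) := lt_of_le_of_lt (le_max_right a M) hn
      linarith [two_pow_ge n]
  · intro ε hε
    rw [frequently_atTop]
    intro a
    obtain ⟨k₀, hk₀⟩ := exists_pow_lt_of_lt_one hε (by norm_num : (2:ℝ)⁻¹ < 1)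
    obtain ⟨n, hn⟩ := exists_nat_gt a
    refine ⟨tt (2*(k₀ + n + 1)), ?_, ?_⟩
    · refine le_trans ?_ (tt_ge (2*(k₀ + n + 1)))
      have hk0 : (0:ℝ) ≤ (k₀:ℝ) := Nat.cast_nonneg k₀
      push_cast; linarith
    · rw [hh_tt, v_even (k₀ + n + 1) (by omega)]
      calc (2:ℝ)⁻¹ ^ (k₀ + n + 1) ≤ (2:ℝ)⁻¹ ^ k₀ :=
            pow_le_pow_of_le_one (by norm_num) (by norm_num) (by omega)
        _ < ε := hk₀

end Zigzag

/-- Example 7.4: there is a strictly increasing sequence `t₀ = 0 < t₁ < t₂ < ⋯` and a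
piecewise linear function `h : [0,∞) → ℝ` with `h(0) = 0`, slope `+1` on each
`(t_{2k}, t_{2k+1})` and slope `−1` on each `(t_{2k+1}, t_{2k+2})`, peaks
`h(t_{2k+1}) = 2^k` and valleys `h(t_{2k}) = 2^{−k}` (for `k ≥ 1`); `h` is
1-Lipschitz on `[0,∞)`, positive on `(0,∞)`, and `limsup_{t→∞} h(t) = ∞` while
`liminf_{t→∞} h(t) = 0`. -/
theorem zigzag_function_exists :
    ∃ t : ℕ → ℝ, StrictMono t ∧ t 0 = 0 ∧
      ∃ h : ℝ → ℝ, h 0 = 0 ∧ LipschitzOnWith 1 h (Ici 0) ∧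
        (∀ k : ℕ, h (t (2 * k + 1)) = 2 ^ k) ∧
        (∀ k : ℕ, 1 ≤ k → h (t (2 * k)) = (2 : ℝ)⁻¹ ^ k) ∧
        (∀ k : ℕ, ∀ s ∈ Icc (t (2 * k)) (t (2 * k + 1)),
          h s = h (t (2 * k)) + (s - t (2 * k))) ∧
        (∀ k : ℕ, ∀ s ∈ Icc (t (2 * k + 1)) (t (2 * k + 2)),
          h s = h (t (2 * k + 1)) - (s - t (2 * k + 1))) ∧
        (∀ s : ℝ, 0 < s → 0 < h s) ∧
        (∀ M : ℝ, ∃ᶠ s in atTop, M < h s) ∧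
        (∀ ε : ℝ, 0 < ε → ∃ᶠ s in atTop, h s < ε) := by
  exact Zigzag.main
end

section
/- Suppose g : U → [0, ∞) is measurable on an open set U ⊂ ℝⁿ, ε > 0, and for almost every r ∈ (0, ε) we have ∫_{U_r} P = ∫_{U_r} N, where U_r = {x ∈ U : φ(x) < r} for a measurable φ : U → [0, ε), and P, N : U → [0, ∞) are integrable with ∫_U P < ∞ or ∫_U N < ∞. If additionally ∫_U N/φⁿ < ∞ and ∫_U P dx < ∞, then ∫_U P/φⁿ = ∫_U N/φⁿ, where both sides may a priori be infinite. (Multiplying the level-set identity by n r^{−n−1}, integrating over r ∈ (0, ε), and applying Fubini–Tonelli yields ∫_U P (φ^{−n} − ε^{−n}) = ∫_U N (φ^{−n} − ε^{−n}).) -/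
open MeasureTheory Set
open scoped ENNReal

private lemma kernel_c_meas (n : ℕ) :
    Measurable fun r : ℝ => (n : ℝ≥0∞) * (ENNReal.ofReal r ^ (n+1))⁻¹ :=
  measurable_const.mul ((ENNReal.measurable_ofReal.pow_const _).inv)

private lemma kernel_integral (n : ℕ) {a ε : ℝ} (ha : 0 < a) (haε : a < ε) :
    ∫⁻ r in Ioo a ε, (n : ℝ≥0∞) * (ENNReal.ofReal r ^ (n+1))⁻¹
      = ENNReal.ofReal ((a ^ n)⁻¹ - (ε ^ n)⁻¹) := by
  have hε : 0 < ε := ha.trans haε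
  rcases Nat.eq_zero_or_pos n with hn | hn
  · subst hn; simp
  have h1 : ∀ r ∈ Ioo a ε, (n : ℝ≥0∞) * (ENNReal.ofReal r ^ (n+1))⁻¹
      = ENNReal.ofReal ((n : ℝ) * (r ^ (n+1))⁻¹) := by
    intro r hr
    have hr0 : 0 < r := ha.trans hr.1
    rw [ENNReal.ofReal_mul (by positivity), ENNReal.ofReal_inv_of_pos (by positivity),
      ENNReal.ofReal_pow hr0.le, ENNReal.ofReal_natCast]
  rw [setLIntegral_congr_fun measurableSet_Ioo h1]
  have hcont : ContinuousOn (fun r : ℝ => (n:ℝ) * (r ^ (n+1))⁻¹) (Icc a ε) := by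
    refine continuousOn_const.mul (ContinuousOn.inv₀ ((continuousOn_id).pow _) ?_)
    intro r hr
    have : 0 < r := lt_of_lt_of_le ha hr.1
    positivity
  have hg : IntegrableOn (fun r : ℝ => (n:ℝ) * (r ^ (n+1))⁻¹) (Ioo a ε) :=
    (hcont.integrableOn_Icc).mono_set Ioo_subset_Icc_self
  rw [← MeasureTheory.ofReal_integral_eq_lintegral_ofReal hg
      (ae_restrict_of_forall_mem measurableSet_Ioo fun r hr => by
        have : 0 < r := ha.trans hr.1; positivity)]
  congr 1
  have hIoc : ∫ r in Ioo a ε, (n:ℝ) * (r ^ (n+1))⁻¹ = ∫ r in a..ε, (n:ℝ) * (r ^ (n+1))⁻¹ := by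
    rw [intervalIntegral.integral_of_le haε.le, MeasureTheory.integral_Ioc_eq_integral_Ioo]
  rw [hIoc]
  have hfun : ∀ r : ℝ, (n:ℝ) * (r ^ (n+1))⁻¹ = (n:ℝ) * r ^ (-((n:ℤ)+1)) := by
    intro r
    rw [zpow_neg, ← zpow_natCast r (n+1)]
    push_cast
    ring_nf
  simp only [hfun]
  rw [intervalIntegral.integral_const_mul,
    integral_zpow (Or.inr ⟨by omega, by
      rw [uIcc_of_le haε.le]
      exact fun h => absurd h.1 (by linarith)⟩)]
  have h2 : (-((n:ℤ)+1) + 1) = -(n:ℤ) := by ring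
  rw [h2]
  have hn' : (n:ℝ) ≠ 0 := Nat.cast_ne_zero.mpr hn.ne'
  rw [zpow_neg, zpow_neg, zpow_natCast, zpow_natCast]
  have ha' : (a:ℝ)^n ≠ 0 := by positivity
  have hε' : (ε:ℝ)^n ≠ 0 := by positivity
  push_cast
  field_simp
  rw [show (-((n:ℝ)+1)+1) = -(n:ℝ) by ring, mul_div_right_comm, div_neg, div_self hn']
  ring

private lemma kernel_infty (n : ℕ) (hn : n ≠ 0) {ε : ℝ} (hε : 0 < ε) :
    ∫⁻ r in Ioo 0 ε, (n : ℝ≥0∞) * (ENNReal.ofReal r ^ (n+1))⁻¹ = ⊤ := by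
  by_contra hI
  set I := ∫⁻ r in Ioo 0 ε, (n : ℝ≥0∞) * (ENNReal.ofReal r ^ (n+1))⁻¹ with hIdef
  have key : ∀ k : ℕ, ((k:ℝ)+1) - (ε ^ n)⁻¹ ≤ I.toReal := by
    intro k
    set a : ℝ := min (ε/2) (1/(k+1)) with hadef
    have ha : 0 < a := lt_min (by positivity) (by positivity)
    have haε : a < ε := lt_of_le_of_lt (min_le_left _ _) (by linarith)
    have hle : ENNReal.ofReal ((a ^ n)⁻¹ - (ε ^ n)⁻¹) ≤ I := by
      rw [← kernel_integral n ha haε]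
      exact lintegral_mono_set (fun r hr => ⟨ha.trans hr.1, hr.2⟩)
    have h1 : (a ^ n)⁻¹ - (ε ^ n)⁻¹ ≤ I.toReal :=
      (ENNReal.ofReal_le_iff_le_toReal hI).mp hle
    have h2 : (k:ℝ)+1 ≤ (a ^ n)⁻¹ := by
      have hak : a ≤ 1/((k:ℝ)+1) := min_le_right _ _
      have hk1 : (0:ℝ) < (k:ℝ)+1 := by positivity
      have : a ^ n ≤ (1/((k:ℝ)+1)) ^ n := pow_le_pow_left₀ ha.le hak n
      have h3 : ((k:ℝ)+1) ^ n ≤ (a^n)⁻¹ := by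
        rw [div_pow, one_pow, one_div] at this
        have hap : 0 < a ^ n := by positivity
        have h4 := inv_anti₀ hap this
        rwa [inv_inv] at h4
      exact le_trans (le_self_pow₀ (by linarith) hn) h3
    linarith
  obtain ⟨k, hk⟩ := exists_nat_gt (I.toReal + (ε ^ n)⁻¹)
  have := key k
  linarith

private lemma kernel_eq (n : ℕ) {a ε : ℝ} (ha : 0 ≤ a) (haε : a < ε) :
    (ENNReal.ofReal a ^ n)⁻¹ =
      (∫⁻ r in Ioo a ε, (n : ℝ≥0∞) * (ENNReal.ofReal r ^ (n+1))⁻¹)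
        + (ENNReal.ofReal ε ^ n)⁻¹ := by
  have hε : 0 < ε := lt_of_le_of_lt ha haε
  rcases Nat.eq_zero_or_pos n with hn | hn
  · subst hn; simp
  rcases eq_or_lt_of_le ha with ha0 | ha0
  · rw [← ha0, kernel_infty n hn.ne' hε]
    simp [hn.ne']
  · rw [kernel_integral n ha0 haε]
    have hεn : 0 < ε ^ n := by positivity
    have han : 0 < a ^ n := by positivity
    have hmono : (ε ^ n)⁻¹ ≤ (a ^ n)⁻¹ := by
      apply inv_anti₀ han (pow_le_pow_left₀ ha0.le haε.le n)
    rw [← ENNReal.ofReal_pow hε.le, ← ENNReal.ofReal_inv_of_pos hεn,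
      ← ENNReal.ofReal_add (by linarith) (by positivity), sub_add_cancel,
      ENNReal.ofReal_inv_of_pos han, ENNReal.ofReal_pow ha0.le]

private lemma tonelli_kernel {α : Type*} [MeasurableSpace α] (μ : Measure α) [SigmaFinite μ]
    (n : ℕ) (U : Set α) (hU : MeasurableSet U) {ε : ℝ} (hε : 0 < ε)
    (φ : α → ℝ) (hφm : Measurable φ) (hφ : ∀ x ∈ U, φ x ∈ Ico 0 ε)
    (h : α → ℝ≥0∞) (hh : Measurable h) :
    ∫⁻ x in U, h x * (ENNReal.ofReal (φ x) ^ n)⁻¹ ∂μ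
      = (∫⁻ r in Ioo 0 ε, (n : ℝ≥0∞) * (ENNReal.ofReal r ^ (n+1))⁻¹
            * ∫⁻ x in {x ∈ U | φ x < r}, h x ∂μ)
        + (ENNReal.ofReal ε ^ n)⁻¹ * ∫⁻ x in U, h x ∂μ := by
  set c : ℝ → ℝ≥0∞ := fun r => (n : ℝ≥0∞) * (ENNReal.ofReal r ^ (n+1))⁻¹ with hc
  have hcm : Measurable c := kernel_c_meas n
  have step1 : ∀ x ∈ U, h x * (ENNReal.ofReal (φ x) ^ n)⁻¹
      = (∫⁻ r in Ioo 0 ε, (if φ x < r then c r * h x else 0)) + (ENNReal.ofReal ε ^ n)⁻¹ * h x := by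
    intro x hx
    have h0 := (hφ x hx).1
    have h1 := (hφ x hx).2
    rw [kernel_eq n h0 h1, mul_add, mul_comm (h x) ((ENNReal.ofReal ε ^ n)⁻¹)]
    congr 1
    have hset : Ioi (φ x) ∩ Ioo 0 ε = Ioo (φ x) ε := by
      ext r
      constructor
      · rintro ⟨h1', h2'⟩; exact ⟨h1', h2'.2⟩
      · rintro ⟨h1', h2'⟩; exact ⟨h1', lt_of_le_of_lt h0 h1', h2'⟩
    have e1 : ∀ r : ℝ, (if φ x < r then c r * h x else 0)
        = (Ioi (φ x)).indicator (fun r => c r * h x) r := by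
      intro r; simp [Set.indicator_apply, mem_Ioi]
    calc h x * ∫⁻ r in Ioo (φ x) ε, c r
        = ∫⁻ r in Ioo (φ x) ε, c r * h x := by
          rw [lintegral_mul_const _ hcm, mul_comm]
      _ = ∫⁻ r in Ioi (φ x) ∩ Ioo 0 ε, c r * h x := by rw [hset]
      _ = ∫⁻ r in Ioo 0 ε, (Ioi (φ x)).indicator (fun r => c r * h x) r := by
          rw [lintegral_indicator measurableSet_Ioi, Measure.restrict_restrict measurableSet_Ioi]
      _ = ∫⁻ r in Ioo 0 ε, (if φ x < r then c r * h x else 0) := by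
          exact lintegral_congr fun r => (e1 r).symm
  rw [setLIntegral_congr_fun hU step1]
  have hFm : Measurable (Function.uncurry fun (x : α) (r : ℝ) => if φ x < r then c r * h x else 0) := by
    apply Measurable.ite
    · exact measurableSet_lt (hφm.comp measurable_fst) measurable_snd
    · exact (hcm.comp measurable_snd).mul (hh.comp measurable_fst)
    · exact measurable_const
  have hInnerMeas : Measurable fun x => ∫⁻ r in Ioo 0 ε, (if φ x < r then c r * h x else 0) :=
    hFm.lintegral_prod_right
  rw [lintegral_add_right _ (hh.const_mul _), lintegral_const_mul _ hh]
  congr 1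
  rw [MeasureTheory.lintegral_lintegral_swap hFm.aemeasurable]
  apply lintegral_congr
  intro r
  have e2 : ∀ x, (if φ x < r then c r * h x else 0)
      = ({x | φ x < r}).indicator (fun x => c r * h x) x := by
    intro x; simp [Set.indicator_apply]
  calc ∫⁻ x in U, (if φ x < r then c r * h x else 0) ∂μ
      = ∫⁻ x in U, ({x | φ x < r}).indicator (fun x => c r * h x) x ∂μ :=
        lintegral_congr e2
    _ = ∫⁻ x in {x | φ x < r} ∩ U, c r * h x ∂μ := by
        rw [lintegral_indicator (measurableSet_lt hφm measurable_const),
          Measure.restrict_restrict (measurableSet_lt hφm measurable_const)]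
    _ = c r * ∫⁻ x in {x ∈ U | φ x < r}, h x ∂μ := by
        rw [inter_comm]
        exact lintegral_const_mul _ hh

/-- Layer-cake/Fubini identity (from Lemma 4.3): suppose `U ⊂ ℝⁿ` is open,
`φ : U → [0, ε)` is measurable, `P, N ≥ 0` are integrable on `U`, and for a.e.
`r ∈ (0, ε)` the level-set identity `∫_{U_r} P = ∫_{U_r} N` holds, where
`U_r = {x ∈ U : φ(x) < r}`. If moreover `∫_U N/φⁿ < ∞`, then
`∫_U P/φⁿ = ∫_U N/φⁿ` (both sides a priori possibly infinite, computed in `[0,∞]`). -/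
theorem layer_cake_identity (n : ℕ)
    (U : Set (EuclideanSpace ℝ (Fin n))) (hUo : IsOpen U) (ε : ℝ) (hε : 0 < ε)
    (g : EuclideanSpace ℝ (Fin n) → ℝ) (hgm : Measurable g)
    (hg0 : ∀ x ∈ U, 0 ≤ g x)
    (φ : EuclideanSpace ℝ (Fin n) → ℝ) (hφm : Measurable φ)
    (hφ : ∀ x ∈ U, φ x ∈ Ico 0 ε)
    (P N : EuclideanSpace ℝ (Fin n) → ℝ)
    (hPm : Measurable P) (hNm : Measurable N)
    (hP0 : ∀ x ∈ U, 0 ≤ P x) (hN0 : ∀ x ∈ U, 0 ≤ N x)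
    (hPint : IntegrableOn P U volume) (hNint : IntegrableOn N U volume)
    (hlevel : ∀ᵐ r ∂volume.restrict (Ioo 0 ε),
      ∫ x in {x ∈ U | φ x < r}, P x = ∫ x in {x ∈ U | φ x < r}, N x)
    (hNφ : ∫⁻ x in U, ENNReal.ofReal (N x) / ENNReal.ofReal (φ x) ^ n ≠ ⊤) :
    ∫⁻ x in U, ENNReal.ofReal (P x) / ENNReal.ofReal (φ x) ^ n =
      ∫⁻ x in U, ENNReal.ofReal (N x) / ENNReal.ofReal (φ x) ^ n := by
  have hUm : MeasurableSet U := hUo.measurableSet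
  have hpmeas : ∀ r : ℝ, MeasurableSet {x ∈ U | φ x < r} :=
    fun r => hUm.inter (hφm measurableSet_Iio)
  -- Step B : total integrals agree
  have hbad : volume ({r | ¬ (∫ x in {x ∈ U | φ x < r}, P x = ∫ x in {x ∈ U | φ x < r}, N x)}
      ∩ Ioo 0 ε) = 0 := by
    have := ae_iff.mp hlevel
    rwa [Measure.restrict_apply' measurableSet_Ioo] at this
  have hex : ∀ k : ℕ, ∃ t, t ∈ Ioo (ε - ε/(k+2)) ε ∧
      ∫ x in {x ∈ U | φ x < t}, P x = ∫ x in {x ∈ U | φ x < t}, N x := by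
    intro k
    by_contra hcon
    push_neg at hcon
    have hk2 : (0:ℝ) < (k:ℝ) + 2 := by positivity
    have hlb : 0 < ε - ε/((k:ℝ)+2) := by
      have : ε/((k:ℝ)+2) < ε := by
        rw [div_lt_iff₀ hk2]
        nlinarith
      linarith
    have hsub : Ioo (ε - ε/((k:ℝ)+2)) ε ⊆
        {r | ¬ (∫ x in {x ∈ U | φ x < r}, P x = ∫ x in {x ∈ U | φ x < r}, N x)} ∩ Ioo 0 ε := by
      intro r hr
      exact ⟨hcon r hr, hlb.trans hr.1, hr.2⟩
    have hpos : (0:ℝ≥0∞) < volume (Ioo (ε - ε/((k:ℝ)+2)) ε) := by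
      rw [Real.volume_Ioo]
      apply ENNReal.ofReal_pos.mpr
      rw [show ε - (ε - ε/((k:ℝ)+2)) = ε/((k:ℝ)+2) by ring]
      positivity
    exact absurd (measure_mono_null hsub hbad) hpos.ne'
  choose t ht hp using hex
  have hne : ∀ k : ℕ, (Finset.range (k+1)).Nonempty := fun k => Finset.nonempty_range_add_one
  set s : ℕ → ℝ := fun k => (Finset.range (k+1)).sup' (hne k) t with hsdef
  have hsmono : Monotone s := by
    intro i j hij
    apply Finset.sup'_le (hne i) t
    intro b hb
    exact Finset.le_sup' t (Finset.mem_range.mpr (by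
      have := Finset.mem_range.mp hb; omega))
  have hsspec : ∀ k, (∫ x in {x ∈ U | φ x < s k}, P x = ∫ x in {x ∈ U | φ x < s k}, N x)
      ∧ s k < ε := by
    intro k
    obtain ⟨j, _, hjeq⟩ := Finset.exists_mem_eq_sup' (hne k) t
    rw [show s k = t j from hjeq]
    exact ⟨hp j, (ht j).2⟩
  have hslb : ∀ k : ℕ, ε - ε/((k:ℝ)+2) < s k :=
    fun k => lt_of_lt_of_le (ht k).1 (Finset.le_sup' t (Finset.self_mem_range_succ k))
  set A : ℕ → Set (EuclideanSpace ℝ (Fin n)) := fun k => {x ∈ U | φ x < s k} with hAdef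
  have hAmeas : ∀ k, MeasurableSet (A k) := fun k => hpmeas _
  have hAmono : Monotone A := fun i j hij x hx => ⟨hx.1, lt_of_lt_of_le hx.2 (hsmono hij)⟩
  have hAU : ⋃ k, A k = U := by
    apply subset_antisymm
    · exact iUnion_subset fun k x hx => hx.1
    · intro x hx
      have hφx := hφ x hx
      have hd : 0 < ε - φ x := sub_pos.mpr hφx.2
      obtain ⟨k, hk⟩ := exists_nat_gt (ε / (ε - φ x))
      refine mem_iUnion.mpr ⟨k, hx, ?_⟩
      have h1 : ε / ((k:ℝ)+2) < ε - φ x := by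
        rw [div_lt_iff₀ (by positivity)]
        have h2 : ε / (ε - φ x) < (k:ℝ) + 2 := by linarith
        calc ε = (ε / (ε - φ x)) * (ε - φ x) := by field_simp
          _ < ((k:ℝ)+2) * (ε - φ x) := by exact mul_lt_mul_of_pos_right h2 hd
          _ = (ε - φ x) * ((k:ℝ)+2) := by ring
      have := hslb k
      linarith
  have hPt := MeasureTheory.tendsto_setIntegral_of_monotone hAmeas hAmono
    (by rw [hAU]; exact hPint)
  have hNt := MeasureTheory.tendsto_setIntegral_of_monotone hAmeas hAmono
    (by rw [hAU]; exact hNint)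
  rw [hAU] at hPt hNt
  have hcongr : (fun k => ∫ x in A k, P x) = fun k => ∫ x in A k, N x :=
    funext fun k => (hsspec k).1
  rw [hcongr] at hPt
  have hPN : ∫ x in U, P x = ∫ x in U, N x := tendsto_nhds_unique hPt hNt
  have haeP : 0 ≤ᵐ[volume.restrict U] P := ae_restrict_of_forall_mem hUm hP0
  have haeN : 0 ≤ᵐ[volume.restrict U] N := ae_restrict_of_forall_mem hUm hN0
  have lintPN : ∫⁻ x in U, ENNReal.ofReal (P x) = ∫⁻ x in U, ENNReal.ofReal (N x) := by
    rw [← ofReal_integral_eq_lintegral_ofReal hPint haeP,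
      ← ofReal_integral_eq_lintegral_ofReal hNint haeN, hPN]
  -- Step A : lintegral level-set identity
  have hlevelL : ∀ᵐ r ∂volume.restrict (Ioo 0 ε),
      ∫⁻ x in {x ∈ U | φ x < r}, ENNReal.ofReal (P x)
        = ∫⁻ x in {x ∈ U | φ x < r}, ENNReal.ofReal (N x) := by
    filter_upwards [hlevel] with r hr
    rw [← ofReal_integral_eq_lintegral_ofReal (hPint.mono_set (sep_subset _ _))
        (ae_restrict_of_forall_mem (hpmeas r) fun x hx => hP0 x hx.1),
      ← ofReal_integral_eq_lintegral_ofReal (hNint.mono_set (sep_subset _ _))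
        (ae_restrict_of_forall_mem (hpmeas r) fun x hx => hN0 x hx.1), hr]
  -- Conclusion via Tonelli
  simp only [div_eq_mul_inv]
  have eP := tonelli_kernel volume n U hUm hε φ hφm hφ
    (fun x => ENNReal.ofReal (P x)) (ENNReal.measurable_ofReal.comp hPm)
  have eN := tonelli_kernel volume n U hUm hε φ hφm hφ
    (fun x => ENNReal.ofReal (N x)) (ENNReal.measurable_ofReal.comp hNm)
  rw [eP, eN, lintPN]
  congr 1
  apply lintegral_congr_ae
  filter_upwards [hlevelL] with r hr
  rw [hr]
end
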